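/- Let n >= 3. Consider the fair-chores instance with n agents and 3n - 2 chores e_1, ..., e_{3n-2} where: agent 1 has v_1(e_j) = -1/n^2 for 1 <= j <= 2n and v_1(e_j) = -1/n for 2n+1 <= j <= 3n-2; and every agent i >= 2 has v_i(e_j) = -1/(2n) for 1 <= j <= 2n and v_i(e_j) = 0 for 2n+1 <= j <= 3n-2. Then OPT_U >= -2/n, while every connected MMS allocation A satisfies UW(A) <= -1/n - 1/2. Hence the price of MMS with respect to utilitarian welfare for chores is at least 1/2 + n/4 = Omega(n). -/

import Mathlib

open Finset

noncomputable section

/-- The value of a bundle `S` of items under additive (item-level) valuation `v`. -/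
def bundleVal {m : ℕ} (v : Fin m → ℝ) (S : Finset (Fin m)) : ℝ := ∑ e ∈ S, v e

/-- A bundle is connected if it is an interval of the line `e_1, …, e_m`. -/
def IsConnBundle {m : ℕ} (S : Finset (Fin m)) : Prop :=
  ∀ a ∈ S, ∀ c ∈ S, ∀ b : Fin m, a ≤ b → b ≤ c → b ∈ S

/-- A connected allocation: pairwise disjoint connected bundles covering all items. -/
def ConnAlloc (n m : ℕ) (A : Fin n → Finset (Fin m)) : Prop :=
  (∀ i, IsConnBundle (A i)) ∧
  (∀ i j : Fin n, i ≠ j → Disjoint (A i) (A j)) ∧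
  (∀ e : Fin m, ∃ i, e ∈ A i)

/-- The maximin share of an agent with valuation `v`: the maximum over connected
`n`-partitions of the minimum bundle value. -/
def mmsVal (n m : ℕ) (v : Fin m → ℝ) : ℝ :=
  sSup { x : ℝ | ∃ A : Fin n → Finset (Fin m), ConnAlloc n m A ∧ x = ⨅ j, bundleVal v (A j) }

/-- Utilitarian welfare of an allocation. -/
def utilW (n m : ℕ) (v : Fin n → Fin m → ℝ) (A : Fin n → Finset (Fin m)) : ℝ :=
  ∑ i, bundleVal (v i) (A i)

/-- Egalitarian welfare of an allocation. -/
def egalW (n m : ℕ) (v : Fin n → Fin m → ℝ) (A : Fin n → Finset (Fin m)) : ℝ :=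
  ⨅ i, bundleVal (v i) (A i)

/-- Optimal utilitarian welfare over all connected allocations. -/
def optU (n m : ℕ) (v : Fin n → Fin m → ℝ) : ℝ :=
  sSup { x : ℝ | ∃ A, ConnAlloc n m A ∧ x = utilW n m v A }

/-- Optimal egalitarian welfare over all connected allocations. -/
def optE (n m : ℕ) (v : Fin n → Fin m → ℝ) : ℝ :=
  sSup { x : ℝ | ∃ A, ConnAlloc n m A ∧ x = egalW n m v A }

lemma card_filter_le_of {m : ℕ} (k : ℕ) (p : Fin m → Prop) [DecidablePred p] (f : Fin m → ℕ)
    (hf : ∀ j, p j → f j < k)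
    (hinj : ∀ j j', p j → p j' → f j = f j' → j = j') :
    ((univ : Finset (Fin m)).filter p).card ≤ k := by
  have := Finset.card_le_card_of_injOn (s := (univ : Finset (Fin m)).filter p)
      (t := Finset.range k) f ?_ ?_
  · simpa using this
  · intro a ha
    simp only [coe_filter, mem_filter, mem_univ, true_and, Set.mem_setOf_eq] at ha
    exact Finset.mem_range.mpr (hf a ha)
  · intro a ha b hb hab
    simp only [coe_filter, Set.mem_setOf_eq, mem_univ, true_and] at ha hb
    exact hinj a b ha hb hab

lemma card_filter_val_lt (m k : ℕ) (hk : k ≤ m) :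
    ((univ : Finset (Fin m)).filter (fun j : Fin m => (j:ℕ) < k)).card = k := by
  have : ((univ : Finset (Fin m)).filter (fun j : Fin m => (j:ℕ) < k)).card
      = (Finset.range k).card := by
    exact Finset.card_bij (fun j _ => (j:ℕ))
      (by intro a ha; simp only [mem_filter, mem_univ, true_and] at ha
          exact Finset.mem_range.mpr ha)
      (by intro a ha b hb hab; exact Fin.ext hab)
      (by intro b hb; have hb2 := Finset.mem_range.mp hb
          exact ⟨⟨b, lt_of_lt_of_le hb2 hk⟩, by simp [hb2], rfl⟩)
  simpa using this

lemma bundleVal_const {m : ℕ} (v : Fin m → ℝ) (S : Finset (Fin m)) (c : ℝ)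
    (h : ∀ e ∈ S, v e = c) : bundleVal v S = S.card * c := by
  rw [bundleVal, Finset.sum_congr rfl h, Finset.sum_const, nsmul_eq_mul]

lemma bundleVal_nonpos {m : ℕ} (v : Fin m → ℝ) (S : Finset (Fin m))
    (h : ∀ e, v e ≤ 0) : bundleVal v S ≤ 0 :=
  Finset.sum_nonpos (fun e _ => h e)

theorem chores_utilitarian_mms_lower_bound (n : ℕ) (hn : 3 ≤ n)
    (v : Fin n → Fin (3 * n - 2) → ℝ)
    (hv1 : ∀ i : Fin n, (i : ℕ) = 0 → ∀ j : Fin (3 * n - 2),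
      v i j = if (j : ℕ) < 2 * n then -(1 / (n : ℝ) ^ 2) else -(1 / (n : ℝ)))
    (hv2 : ∀ i : Fin n, (i : ℕ) ≠ 0 → ∀ j : Fin (3 * n - 2),
      v i j = if (j : ℕ) < 2 * n then -(1 / (2 * (n : ℝ))) else 0) :
    -(2 / (n : ℝ)) ≤ optU n (3 * n - 2) v ∧
    ∀ A : Fin n → Finset (Fin (3 * n - 2)), ConnAlloc n (3 * n - 2) A →
      (∀ i, mmsVal n (3 * n - 2) (v i) ≤ bundleVal (v i) (A i)) →
      utilW n (3 * n - 2) v A ≤ -(1 / (n : ℝ)) - 1 / 2 := by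
  have hnpos : 0 < n := by omega
  have hN : (3:ℝ) ≤ (n:ℝ) := by exact_mod_cast hn
  have hN0 : (0:ℝ) < (n:ℝ) := by positivity
  set i0 : Fin n := ⟨0, hnpos⟩ with hi0
  have hvle : ∀ i (j : Fin (3*n-2)), v i j ≤ 0 := by
    intro i j
    by_cases hi : (i:ℕ) = 0
    · rw [hv1 i hi j]; split <;> (rw [neg_nonpos]; positivity)
    · rw [hv2 i hi j]; split
      · rw [neg_nonpos]; positivity
      · exact le_rfl
  -- utilW is always nonpositive
  have hUW0 : ∀ B : Fin n → Finset (Fin (3*n-2)), utilW n (3*n-2) v B ≤ 0 := by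
    intro B
    exact Finset.sum_nonpos (fun i _ => bundleVal_nonpos _ _ (hvle i))
  constructor
  · -- Part 1 : optU ≥ -2/n
    classical
    set A : Fin n → Finset (Fin (3*n-2)) := fun i =>
      (univ : Finset (Fin (3*n-2))).filter
        (fun e => ((i:ℕ) = 0 ∧ (e:ℕ) < 2*n) ∨ (1 ≤ (i:ℕ) ∧ (e:ℕ) + 1 = 2*n + (i:ℕ))) with hA
    have hconn : ConnAlloc n (3*n-2) A := by
      refine ⟨?_, ?_, ?_⟩
      · intro i a ha c hc b hab hbc
        simp only [hA, mem_filter, mem_univ, true_and] at ha hc ⊢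
        have h1 : (a:ℕ) ≤ (b:ℕ) := hab
        have h2 : (b:ℕ) ≤ (c:ℕ) := hbc
        omega
      · intro i j hij
        rw [Finset.disjoint_left]
        intro e he he'
        simp only [hA, mem_filter, mem_univ, true_and] at he he'
        have : (i:ℕ) ≠ (j:ℕ) := fun h => hij (Fin.ext h)
        omega
      · intro e
        by_cases he : (e:ℕ) < 2*n
        · exact ⟨i0, by simp [hA, hi0, he]⟩
        · have h1 : (e:ℕ) < 3*n - 2 := e.isLt
          refine ⟨⟨(e:ℕ) + 1 - 2*n, by omega⟩, ?_⟩
          simp only [hA, mem_filter, mem_univ, true_and]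
          right
          rw [Fin.val_mk]
          omega
    have hA0 : A i0 = (univ : Finset (Fin (3*n-2))).filter (fun e : Fin (3*n-2) => (e:ℕ) < 2*n) := by
      ext e; simp [hA, hi0]
    have hval : -(2/(n:ℝ)) ≤ utilW n (3*n-2) v A := by
      have hrest : ∀ i : Fin n, i ≠ i0 → bundleVal (v i) (A i) = 0 := by
        intro i hi
        have hi' : (i:ℕ) ≠ 0 := fun h => hi (Fin.ext h)
        apply Finset.sum_eq_zero
        intro e he
        simp only [hA, mem_filter, mem_univ, true_and] at he
        have he2 : ¬ ((e:ℕ) < 2*n) := by omega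
        rw [hv2 i hi' e, if_neg he2]
      have hmain : utilW n (3*n-2) v A = bundleVal (v i0) (A i0) := by
        rw [utilW]
        exact Finset.sum_eq_single i0 (fun b _ hb => hrest b hb) (fun h => absurd (mem_univ i0) h)
      rw [hmain, hA0]
      have hc : ((univ : Finset (Fin (3*n-2))).filter (fun e : Fin (3*n-2) => (e:ℕ) < 2*n)).card = 2*n :=
        card_filter_val_lt _ _ (by omega)
      rw [bundleVal_const _ _ (-(1/(n:ℝ)^2)) (fun e he => by
        simp only [mem_filter, mem_univ, true_and] at he
        rw [hv1 i0 rfl e, if_pos he]), hc]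
      push_cast
      have heq : 2 * (n:ℝ) * -(1 / (n:ℝ) ^ 2) = -(2 / (n:ℝ)) := by
        field_simp
      linarith [heq.le, heq.ge]
    refine le_trans hval (le_csSup ?_ ⟨A, hconn, rfl⟩)
    exact ⟨0, by rintro x ⟨B, hB, rfl⟩; exact hUW0 B⟩
  · -- Part 2
    intro A hA hmms
    classical
    -- lower bound on MMS of agent 0
    have hmms0 : -(1/(n:ℝ)) ≤ mmsVal n (3*n-2) (v i0) := by
      set B : Fin n → Finset (Fin (3*n-2)) := fun j =>
        (univ : Finset (Fin (3*n-2))).filter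
          (fun e => ((j:ℕ) = 0 ∧ (e:ℕ) < n) ∨ ((j:ℕ) = 1 ∧ n ≤ (e:ℕ) ∧ (e:ℕ) < 2*n) ∨
            (2 ≤ (j:ℕ) ∧ (e:ℕ) + 2 = 2*n + (j:ℕ))) with hB
      have hconnB : ConnAlloc n (3*n-2) B := by
        refine ⟨?_, ?_, ?_⟩
        · intro j a ha c hc b hab hbc
          simp only [hB, mem_filter, mem_univ, true_and] at ha hc ⊢
          have h1 : (a:ℕ) ≤ (b:ℕ) := hab
          have h2 : (b:ℕ) ≤ (c:ℕ) := hbc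
          omega
        · intro j j' hjj
          rw [Finset.disjoint_left]
          intro e he he'
          simp only [hB, mem_filter, mem_univ, true_and] at he he'
          have : (j:ℕ) ≠ (j':ℕ) := fun h => hjj (Fin.ext h)
          omega
        · intro e
          have h1 : (e:ℕ) < 3*n - 2 := e.isLt
          by_cases he : (e:ℕ) < n
          · exact ⟨i0, by simp [hB, hi0, he]⟩
          · by_cases he2 : (e:ℕ) < 2*n
            · refine ⟨⟨1, by omega⟩, ?_⟩
              simp only [hB, mem_filter, mem_univ, true_and]
              right; left
              rw [Fin.val_mk]
              omega
            · refine ⟨⟨(e:ℕ) + 2 - 2*n, by omega⟩, ?_⟩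
              simp only [hB, mem_filter, mem_univ, true_and]
              right; right
              rw [Fin.val_mk]
              omega
      -- every bundle of B has value ≥ -1/n for agent 0
      have hge : ∀ j : Fin n, -(1/(n:ℝ)) ≤ bundleVal (v i0) (B j) := by
        intro j
        rcases Nat.lt_or_ge (j:ℕ) 2 with hj | hj
        · -- j = 0 or 1 : small items, card ≤ n
          have hmem : ∀ e ∈ B j, v i0 e = -(1/(n:ℝ)^2) := by
            intro e he
            simp only [hB, mem_filter, mem_univ, true_and] at he
            have : (e:ℕ) < 2*n := by omega
            rw [hv1 i0 rfl e, if_pos this]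
          rw [bundleVal_const _ _ _ hmem]
          have hcard : (B j).card ≤ n := by
            rcases (by omega : (j:ℕ) = 0 ∨ (j:ℕ) = 1) with hj0 | hj1
            · apply card_filter_le_of n _ (fun e => (e:ℕ))
              · intro e he; omega
              · intro e e' he he' hee
                exact Fin.ext hee
            · apply card_filter_le_of n _ (fun e => (e:ℕ) - n)
              · intro e he; omega
              · intro e e' he he' hee
                refine Fin.ext ?_
                omega
          have : ((B j).card : ℝ) ≤ (n:ℝ) := by exact_mod_cast hcard
          have h2 : ((B j).card : ℝ) * (1/(n:ℝ)^2) ≤ (n:ℝ) * (1/(n:ℝ)^2) := by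
            apply mul_le_mul_of_nonneg_right this
            positivity
          have h3 : (n:ℝ) * (1/(n:ℝ)^2) = 1/(n:ℝ) := by field_simp
          nlinarith
        · -- j ≥ 2 : one big item
          have hmem : ∀ e ∈ B j, v i0 e = -(1/(n:ℝ)) := by
            intro e he
            simp only [hB, mem_filter, mem_univ, true_and] at he
            have : ¬ ((e:ℕ) < 2*n) := by omega
            rw [hv1 i0 rfl e, if_neg this]
          rw [bundleVal_const _ _ _ hmem]
          have hcard : (B j).card ≤ 1 := by
            apply card_filter_le_of 1 _ (fun _ => 0)
            · intro e he; omega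
            · intro e e' he he' hee
              refine Fin.ext ?_
              omega
          have : ((B j).card : ℝ) ≤ 1 := by exact_mod_cast hcard
          have h2 : ((B j).card : ℝ) * (1/(n:ℝ)) ≤ 1 * (1/(n:ℝ)) := by
            apply mul_le_mul_of_nonneg_right this
            positivity
          nlinarith
      have hne : Nonempty (Fin n) := ⟨i0⟩
      refine le_csSup_of_le ?_ ⟨B, hconnB, rfl⟩ (le_ciInf hge)
      · refine ⟨0, ?_⟩
        rintro x ⟨C, hC, rfl⟩
        refine le_trans (ciInf_le (Set.Finite.bddBelow (Set.finite_range _)) i0) ?_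
        exact bundleVal_nonpos _ _ (hvle i0)
    have hA0v : -(1/(n:ℝ)) ≤ bundleVal (v i0) (A i0) := le_trans hmms0 (hmms i0)
    -- counting
    set p : Fin (3*n-2) → Prop := fun e => (e:ℕ) < 2*n with hp
    set s : Fin n → ℕ := fun i => ((A i).filter p).card with hs
    have hsum : ∑ i, s i = 2*n := by
      have hdisj : ((univ : Finset (Fin n)) : Set (Fin n)).PairwiseDisjoint (fun i => (A i).filter p) := by
        intro i _ j _ hij
        exact Finset.disjoint_filter_filter (hA.2.1 i j hij)
      have hbu : (univ : Finset (Fin n)).biUnion (fun i => (A i).filter p)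
          = (univ : Finset (Fin (3*n-2))).filter (fun e : Fin (3*n-2) => (e:ℕ) < 2*n) := by
        ext e
        simp only [mem_biUnion, mem_filter, mem_univ, true_and, hp]
        constructor
        · rintro ⟨i, _, h2⟩; exact h2
        · intro he
          obtain ⟨i, hi⟩ := hA.2.2 e
          exact ⟨i, hi, he⟩
      calc ∑ i, s i = ((univ : Finset (Fin n)).biUnion (fun i => (A i).filter p)).card :=
              (Finset.card_biUnion (fun i hi j hj hij => hdisj hi hj hij)).symm
        _ = 2*n := by rw [hbu]; exact card_filter_val_lt _ _ (by omega)
    -- value of agent 0's bundle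
    set b0 : ℕ := ((A i0).filter (fun e => ¬ p e)).card with hb0
    have hval0 : bundleVal (v i0) (A i0) = -((s i0 : ℝ)/(n:ℝ)^2) - (b0 : ℝ)/(n:ℝ) := by
      rw [bundleVal, Finset.sum_congr rfl (fun e (_ : e ∈ A i0) => hv1 i0 rfl e), Finset.sum_ite]
      rw [Finset.sum_const, Finset.sum_const, nsmul_eq_mul, nsmul_eq_mul]
      simp only [hs, hb0, hp]
      ring
    have hvali : ∀ i : Fin n, i ≠ i0 → bundleVal (v i) (A i) = -((s i : ℝ)/(2*(n:ℝ))) := by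
      intro i hi
      have hi' : (i:ℕ) ≠ 0 := fun h => hi (Fin.ext h)
      rw [bundleVal, Finset.sum_congr rfl (fun e (_ : e ∈ A i) => hv2 i hi' e), Finset.sum_ite]
      rw [Finset.sum_const, Finset.sum_const, nsmul_eq_mul, nsmul_eq_mul]
      simp only [hs, hp]
      ring
    -- put together
    have hsplit : utilW n (3*n-2) v A
        = bundleVal (v i0) (A i0) + ∑ i ∈ univ.erase i0, bundleVal (v i) (A i) := by
      rw [utilW, ← Finset.add_sum_erase _ _ (mem_univ i0)]
    have hrestsum : ∑ i ∈ univ.erase i0, bundleVal (v i) (A i)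
        = -((2*(n:ℝ) - (s i0 : ℝ))/(2*(n:ℝ))) := by
      have h1 : ∑ i ∈ univ.erase i0, bundleVal (v i) (A i)
          = ∑ i ∈ univ.erase i0, -((s i : ℝ)/(2*(n:ℝ))) := by
        apply Finset.sum_congr rfl
        intro i hi
        exact hvali i (Finset.ne_of_mem_erase hi)
      rw [h1]
      have h2 : ∑ i ∈ univ.erase i0, (s i : ℝ) = 2*(n:ℝ) - (s i0 : ℝ) := by
        have h3 : s i0 + ∑ i ∈ univ.erase i0, s i = 2*n := by
          rw [Finset.add_sum_erase _ _ (mem_univ i0)]; exact hsum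
        have h4 : (∑ i ∈ univ.erase i0, (s i : ℝ)) = ((∑ i ∈ univ.erase i0, s i : ℕ) : ℝ) := by
          push_cast; ring
        rw [h4]
        have : ∑ i ∈ univ.erase i0, s i = 2*n - s i0 := by omega
        rw [this]
        have h5 : s i0 ≤ 2*n := by omega
        push_cast [Nat.cast_sub h5]
        ring
      simp only [← neg_div]
      rw [← Finset.sum_div, Finset.sum_neg_distrib, h2, neg_div]
    -- final arithmetic
    have hs0 : (0:ℝ) ≤ (s i0 : ℝ) := Nat.cast_nonneg _
    have hb00 : (0:ℝ) ≤ (b0 : ℝ) := Nat.cast_nonneg _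
    rw [hsplit, hrestsum, hval0]
    rw [hval0] at hA0v
    have hkey : (s i0 : ℝ) + (b0:ℝ) * (n:ℝ) ≤ (n:ℝ) := by
      have h1 : (s i0 : ℝ)/(n:ℝ)^2 + (b0:ℝ)/(n:ℝ) ≤ 1/(n:ℝ) := by linarith
      have h2 : ((s i0 : ℝ)/(n:ℝ)^2 + (b0:ℝ)/(n:ℝ)) * (n:ℝ)^2 ≤ (1/(n:ℝ)) * (n:ℝ)^2 := by
        apply mul_le_mul_of_nonneg_right h1
        positivity
      have h3 : ((s i0 : ℝ)/(n:ℝ)^2 + (b0:ℝ)/(n:ℝ)) * (n:ℝ)^2 = (s i0 : ℝ) + (b0:ℝ)*(n:ℝ) := by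
        field_simp
      have h4 : (1/(n:ℝ)) * (n:ℝ)^2 = (n:ℝ) := by field_simp
      linarith
    set S0 := (s i0 : ℝ)
    set B0 := (b0 : ℝ)
    have hS0N : S0 ≤ (n:ℝ) := by nlinarith [mul_nonneg hb00 hN0.le]
    have hpoly : -2*S0 - 2*B0*(n:ℝ) + S0*(n:ℝ) - (n:ℝ)^2 + 2*(n:ℝ) ≤ 0 := by
      nlinarith [mul_nonneg (sub_nonneg.mpr hS0N) (by linarith : (0:ℝ) ≤ (n:ℝ) - 2),
        mul_nonneg hb00 hN0.le]
    have heq : (-(S0/(n:ℝ)^2) - B0/(n:ℝ) + -((2*(n:ℝ) - S0)/(2*(n:ℝ)))) - (-(1/(n:ℝ)) - 1/2)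
        = (-2*S0 - 2*B0*(n:ℝ) + S0*(n:ℝ) - (n:ℝ)^2 + 2*(n:ℝ)) / (2*(n:ℝ)^2) := by
      field_simp
      ring
    have hfin : (-2*S0 - 2*B0*(n:ℝ) + S0*(n:ℝ) - (n:ℝ)^2 + 2*(n:ℝ)) / (2*(n:ℝ)^2) ≤ 0 :=
      div_nonpos_of_nonpos_of_nonneg hpoly (by positivity)
    linarith [heq, hfin]
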